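/- As formal power series in w (with coefficients in formal power series in q with rational function coefficients in x), the infinite product ∏_{h≥1} (1 + x w q^h/(1 + x q^h)) equals 1 - w ∑_{i≥1} (-x)^i (q^i/(1-q^i)) ∏_{1 ≤ h < i} (1 - w q^h/(1-q^h)). -/

import Mathlib

open Finset PowerSeries

/-- The base field of rational functions in `x`. -/
noncomputable abbrev FLField : Type := RatFunc ℚ

/-- Formal power series in `q` with rational-function (in `x`) coefficients. -/
noncomputable abbrev QSeries : Type := PowerSeries FLField

/-- Formal power series in `w` over `QSeries`. -/
noncomputable abbrev WSeries : Type := PowerSeries QSeries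

/-- `x` as an element of `QSeries`. -/
noncomputable def xq : QSeries := PowerSeries.C (R := FLField) (RatFunc.X)

/-- The `q`-variable of `QSeries`. -/
noncomputable def qv : QSeries := PowerSeries.X

/-- coefficient of `X^n` in a product of `1 + c_h X`. -/
lemma coeff_prod_one_add (s : Finset ℕ) (f : ℕ → QSeries) (n : ℕ) :
    PowerSeries.coeff (R := QSeries) n (∏ h ∈ s, (1 + PowerSeries.C (R := QSeries) (f h) * PowerSeries.X))
      = ∑ S ∈ s.powersetCard n, ∏ h ∈ S, f h := by
  have h1 : ∀ h : ℕ, (1 : WSeries) + PowerSeries.C (R := QSeries) (f h) * PowerSeries.X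
      = PowerSeries.C (R := QSeries) (f h) * PowerSeries.X + 1 := fun h => add_comm _ _
  simp_rw [h1, Finset.prod_add, prod_const_one, mul_one]
  rw [map_sum]
  have h2 : ∀ t : Finset ℕ, (PowerSeries.coeff (R := QSeries) n)
      (∏ h ∈ t, (PowerSeries.C (R := QSeries) (f h) * PowerSeries.X))
      = if t.card = n then ∏ h ∈ t, f h else 0 := by
    intro t
    rw [Finset.prod_mul_distrib, Finset.prod_const, ← map_prod, PowerSeries.coeff_C_mul,
      PowerSeries.coeff_X_pow]
    by_cases h : n = t.card <;> simp [h, eq_comm]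
  simp_rw [h2]
  rw [Finset.powersetCard_eq_filter, Finset.sum_filter]

/-- geometric series: `(1 - c X^h)⁻¹`. -/
lemma inv_one_sub_C_mul_pow (c : FLField) {h : ℕ} (hh : 0 < h) :
    (1 - PowerSeries.C (R := FLField) c * PowerSeries.X ^ h)⁻¹
      = PowerSeries.mk fun n => if h ∣ n then c ^ (n / h) else 0 := by
  have hc : PowerSeries.constantCoeff (R := FLField) (1 - PowerSeries.C (R := FLField) c * PowerSeries.X ^ h) ≠ 0 := by
    simp [map_sub, map_mul, map_pow, PowerSeries.constantCoeff_X, zero_pow hh.ne']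
  rw [PowerSeries.inv_eq_iff_mul_eq_one hc]
  ext n
  rw [mul_sub, mul_one, map_sub]
  have : (PowerSeries.mk fun n => if h ∣ n then c ^ (n / h) else 0) *
      (PowerSeries.C (R := FLField) c * PowerSeries.X ^ h)
      = (PowerSeries.C (R := FLField) c * PowerSeries.mk fun n => if h ∣ n then c ^ (n / h) else 0) *
        PowerSeries.X ^ h := by ring
  rw [this, PowerSeries.coeff_mul_X_pow', PowerSeries.coeff_C_mul, PowerSeries.coeff_mk,
    PowerSeries.coeff_one]
  by_cases hn : h ≤ n
  · have hn0 : n ≠ 0 := by omega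
    rw [if_pos hn, PowerSeries.coeff_mk, if_neg hn0]
    by_cases hd : h ∣ n
    · obtain ⟨m, rfl⟩ := hd
      have hm : 1 ≤ m := Nat.pos_of_ne_zero (by rintro rfl; simp at hn0)
      have e1 : h * m - h = h * (m - 1) := by rw [Nat.mul_sub, mul_one]
      rw [if_pos ⟨m, rfl⟩, e1, if_pos ⟨m - 1, rfl⟩, Nat.mul_div_cancel_left _ hh,
        Nat.mul_div_cancel_left _ hh]
      have : c ^ m = c * c ^ (m - 1) := by
        conv_lhs => rw [show m = (m - 1) + 1 by omega]
        ring
      rw [this]; ring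
    · have hd2 : ¬ h ∣ (n - h) := fun hc2 => hd (by
        have := Nat.dvd_add hc2 (dvd_refl h)
        rwa [Nat.sub_add_cancel hn] at this)
      rw [if_neg hd, if_neg hd2, mul_zero, sub_zero]
  · rw [if_neg hn]
    by_cases hn0 : n = 0
    · subst hn0
      simp
    · have : ¬ h ∣ n := fun hd => hn (Nat.le_of_dvd (Nat.pos_of_ne_zero hn0) hd)
      simp [this, hn0]

/-- shorthand for `-x`. -/
noncomputable def zX : FLField := -RatFunc.X

/-- the series `q^h/(1-q^h)`. -/
noncomputable def phiR (h : ℕ) : QSeries := qv ^ h * (1 - qv ^ h)⁻¹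

/-- the series `x q^h/(1+x q^h)`. -/
noncomputable def phiL (h : ℕ) : QSeries := xq * qv ^ h * (1 + xq * qv ^ h)⁻¹

lemma coeff_phiR {h : ℕ} (hh : 0 < h) (n : ℕ) :
    PowerSeries.coeff (R := FLField) n (phiR h) = if h ∣ n ∧ n ≠ 0 then 1 else 0 := by
  have e0 : (1 : QSeries) - qv ^ h = 1 - PowerSeries.C (R := FLField) 1 * PowerSeries.X ^ h := by
    rw [map_one, one_mul]; rfl
  rw [phiR, e0, inv_one_sub_C_mul_pow 1 hh]
  rw [show (qv : QSeries) ^ h = PowerSeries.X ^ h from rfl, PowerSeries.coeff_X_pow_mul']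
  by_cases hn : h ≤ n
  · rw [if_pos hn, PowerSeries.coeff_mk]
    have hiff : h ∣ (n - h) ↔ (h ∣ n ∧ n ≠ 0) := by
      constructor
      · intro hd
        have := Nat.dvd_add hd (dvd_refl h)
        rw [Nat.sub_add_cancel hn] at this
        exact ⟨this, by omega⟩
      · intro ⟨hd, _⟩
        exact Nat.dvd_sub hd (dvd_refl h)
    by_cases hd : h ∣ (n - h)
    · rw [if_pos hd, if_pos (hiff.1 hd), one_pow]
    · rw [if_neg hd, if_neg (fun hc => hd (hiff.2 hc))]
  · rw [if_neg hn, if_neg (fun hc : h ∣ n ∧ n ≠ 0 =>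
      hn (Nat.le_of_dvd (Nat.pos_of_ne_zero hc.2) hc.1))]

lemma coeff_phiL {h : ℕ} (hh : 0 < h) (n : ℕ) :
    PowerSeries.coeff (R := FLField) n (phiL h)
      = if h ∣ n ∧ n ≠ 0 then -zX ^ (n / h) else 0 := by
  have e0 : (1 : QSeries) + xq * qv ^ h
      = 1 - PowerSeries.C (R := FLField) zX * PowerSeries.X ^ h := by
    rw [zX, map_neg, neg_mul, sub_neg_eq_add]; rfl
  have e1 : phiL h = PowerSeries.C (R := FLField) RatFunc.X *
      (PowerSeries.X ^ h * (1 + xq * qv ^ h)⁻¹) := by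
    rw [phiL, xq, qv]; ring
  rw [e1, e0, inv_one_sub_C_mul_pow zX hh, PowerSeries.coeff_C_mul,
    PowerSeries.coeff_X_pow_mul']
  by_cases hn : h ≤ n
  · rw [if_pos hn, PowerSeries.coeff_mk]
    have hn0 : n ≠ 0 := by omega
    by_cases hd : h ∣ n
    · obtain ⟨m, rfl⟩ := hd
      have hm : 1 ≤ m := Nat.pos_of_ne_zero (by rintro rfl; simp at hn0)
      have e2 : h * m - h = h * (m - 1) := by rw [Nat.mul_sub, mul_one]
      rw [e2, if_pos ⟨m - 1, rfl⟩, if_pos ⟨⟨m, rfl⟩, hn0⟩, Nat.mul_div_cancel_left _ hh,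
        Nat.mul_div_cancel_left _ hh]
      have : zX ^ m = zX * zX ^ (m - 1) := by
        conv_lhs => rw [show m = (m - 1) + 1 by omega]
        ring
      rw [this, zX]; ring
    · have hd2 : ¬ h ∣ (n - h) := fun hc2 => hd (by
        have := Nat.dvd_add hc2 (dvd_refl h)
        rwa [Nat.sub_add_cancel hn] at this)
      rw [if_neg hd2, if_neg (fun hc : h ∣ n ∧ n ≠ 0 => hd hc.1), mul_zero]
  · rw [if_neg hn, if_neg (fun hc : h ∣ n ∧ n ≠ 0 =>
      hn (Nat.le_of_dvd (Nat.pos_of_ne_zero hc.2) hc.1)), mul_zero]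



section Comb
variable {b : ℕ}

/-- partial sums of `u · + 1`. -/
def Hf (u : Fin b → ℕ) (j : Fin b) : ℕ := ∑ k ∈ Finset.Iic j, (u k + 1)

/-- the weight. -/
def Wt (u v : Fin b → ℕ) : ℕ := ∑ j, (v j + 1) * Hf u j

lemma Hf_strictMono (u : Fin b → ℕ) : StrictMono (Hf u) := by
  intro j j' hj
  apply Finset.sum_lt_sum_of_subset (Finset.Iic_subset_Iic.2 hj.le)
    (Finset.mem_Iic.2 le_rfl) (fun hc => absurd (Finset.mem_Iic.1 hc) (not_le.2 hj))
    (by omega) (fun k _ _ => by omega)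

lemma le_Hf (u : Fin b → ℕ) (j : Fin b) : u j + 1 ≤ Hf u j :=
  Finset.single_le_sum (f := fun k => u k + 1) (fun k _ => by omega) (Finset.mem_Iic.2 le_rfl)

lemma Hf_pos (u : Fin b → ℕ) (j : Fin b) : 0 < Hf u j :=
  Nat.lt_of_lt_of_le (Nat.succ_pos (u j)) (le_Hf u j)

lemma Hf_le_Wt (u v : Fin b → ℕ) (j : Fin b) : Hf u j ≤ Wt u v :=
  le_trans (Nat.le_mul_of_pos_left _ (by omega))
    (Finset.single_le_sum (f := fun j => (v j + 1) * Hf u j) (fun k _ => by omega)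
      (Finset.mem_univ j))

lemma add_one_le_Wt (u v : Fin b → ℕ) (j : Fin b) : v j + 1 ≤ Wt u v :=
  le_trans (Nat.le_mul_of_pos_right _ (Hf_pos u j))
    (Finset.single_le_sum (f := fun j => (v j + 1) * Hf u j) (fun k _ => by omega)
      (Finset.mem_univ j))

/-- index set of free coordinates of weight `a`. -/
def Dset (a b : ℕ) : Finset ((Fin b → ℕ) × (Fin b → ℕ)) :=
  ((Fintype.piFinset fun _ => Finset.range (a + 1)) ×ˢ
    (Fintype.piFinset fun _ => Finset.range (a + 1))).filter fun p => Wt p.1 p.2 = a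

lemma mem_Dset {a : ℕ} {p : (Fin b → ℕ) × (Fin b → ℕ)} :
    p ∈ Dset a b ↔ Wt p.1 p.2 = a := by
  rw [Dset, Finset.mem_filter, and_iff_right_iff_imp]
  intro hW
  rw [Finset.mem_product]
  constructor <;> rw [Fintype.mem_piFinset] <;> intro k <;> rw [Finset.mem_range]
  · have h1 := le_Hf p.1 k
    have h2 := Hf_le_Wt p.1 p.2 k
    omega
  · have := add_one_le_Wt p.1 p.2 k
    omega

/-- total sum as `Hf` at the last index. -/
lemma Hf_last {n : ℕ} (u : Fin (n + 1) → ℕ) : Hf u (Fin.last n) = ∑ k, (u k + 1) := by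
  rw [Hf]
  congr 1
  ext k
  simp [Fin.le_last]

/-- the key conjugation invariance: reversing and swapping preserves the weight. -/
lemma Wt_swap (u v : Fin b → ℕ) :
    Wt (fun j => v (Fin.rev j)) (fun j => u (Fin.rev j)) = Wt u v := by
  have expand : ∀ w t : Fin b → ℕ,
      Wt w t = ∑ j, ∑ k, if k ≤ j then (t j + 1) * (w k + 1) else 0 := by
    intro w t
    rw [Wt]
    refine Finset.sum_congr rfl fun j _ => ?_
    rw [Hf, Finset.mul_sum, ← Finset.sum_filter]
    refine Finset.sum_congr ?_ fun k _ => rfl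
    ext k; simp [Finset.mem_Iic]
  rw [expand, expand]
  calc (∑ j, ∑ k, if k ≤ j then (u (Fin.rev j) + 1) * (v (Fin.rev k) + 1) else 0)
      = ∑ j, ∑ k, if j ≤ k then (u j + 1) * (v k + 1) else 0 := by
        refine Fintype.sum_equiv Fin.revPerm _ _ fun j => ?_
        refine Fintype.sum_equiv Fin.revPerm _ _ fun k => ?_
        simp only [Fin.revPerm_apply, Fin.rev_rev, Fin.rev_le_rev]
    _ = ∑ k, ∑ j, if j ≤ k then (u j + 1) * (v k + 1) else 0 := Finset.sum_comm
    _ = ∑ j, ∑ k, if k ≤ j then (v j + 1) * (u k + 1) else 0 := by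
        refine Finset.sum_congr rfl fun j _ => Finset.sum_congr rfl fun k _ => ?_
        split_ifs <;> ring

end Comb

section Comb2
variable {b : ℕ}

lemma Iic_zero_fin {n : ℕ} : (Finset.Iic (0 : Fin (n + 1))) = {0} := by
  ext k
  simp only [Finset.mem_Iic, Finset.mem_singleton, Fin.le_def, Fin.ext_iff, Fin.val_zero]
  omega

lemma Iic_succ_fin {n : ℕ} (i : Fin n) :
    Finset.Iic i.succ = insert i.succ (Finset.Iic i.castSucc) := by
  ext k
  simp only [Finset.mem_Iic, Finset.mem_insert, Fin.le_def, Fin.ext_iff, Fin.val_succ,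
    Fin.coe_castSucc]
  omega

lemma Hf_zero {n : ℕ} (u : Fin (n + 1) → ℕ) : Hf u 0 = u 0 + 1 := by
  rw [Hf, Iic_zero_fin, Finset.sum_singleton]

lemma Hf_succ {n : ℕ} (u : Fin (n + 1) → ℕ) (i : Fin n) :
    Hf u i.succ = Hf u i.castSucc + (u i.succ + 1) := by
  rw [Hf, Iic_succ_fin, Finset.sum_insert (by
    simp only [Finset.mem_Iic]
    exact not_le.2 (Fin.castSucc_lt_succ (i := i))), Hf]
  ring

lemma Hf_inj {u u' : Fin b → ℕ} (h : ∀ j, Hf u j = Hf u' j) : u = u' := by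
  funext k
  cases b with
  | zero => exact k.elim0
  | succ n =>
    induction k using Fin.cases with
    | zero =>
      have := h 0
      rw [Hf_zero, Hf_zero] at this
      omega
    | succ i =>
      have h1 := h i.succ
      have h2 := h i.castSucc
      rw [Hf_succ, Hf_succ] at h1
      omega

lemma exists_uOf (e : Fin b → ℕ) (he : StrictMono e) (h1 : ∀ k, 1 ≤ e k) :
    ∃ u : Fin b → ℕ, Hf u = e := by
  cases b with
  | zero => exact ⟨fun k => 0, funext fun k => k.elim0⟩
  | succ n =>
    set eN : ℕ → ℕ := fun t => if h : t < n + 1 then e ⟨t, h⟩ else 0 with heN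
    refine ⟨fun k => if k.val = 0 then e k - 1 else e k - eN (k.val - 1) - 1, funext fun j => ?_⟩
    induction j using Fin.induction with
    | zero =>
      rw [Hf_zero]
      have hz : ((0 : Fin (n + 1)).val = 0) = True := by simp
      simp only [hz, if_true]
      have := h1 0
      omega
    | succ i ih =>
      rw [Hf_succ, ih]
      have hne : (i.succ).val ≠ 0 := by simp [Fin.val_succ]
      have hcast : eN ((i.succ).val - 1) = e i.castSucc := by
        rw [heN]
        simp only [Fin.val_succ, Nat.add_sub_cancel]
        rw [dif_pos (by omega)]
        congr 1
      simp only [if_neg hne, hcast]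
      have := he (Fin.castSucc_lt_succ (i := i))
      omega

end Comb2

section Lmap
variable {b : ℕ}

/-- the finsupp associated to free coordinates. -/
noncomputable def Lmap (p : (Fin b → ℕ) × (Fin b → ℕ)) : ℕ →₀ ℕ :=
  ∑ j, Finsupp.single (Hf p.1 j) ((p.2 j + 1) * Hf p.1 j)

lemma Lmap_apply (p : (Fin b → ℕ) × (Fin b → ℕ)) (j : Fin b) :
    Lmap p (Hf p.1 j) = (p.2 j + 1) * Hf p.1 j := by
  rw [Lmap, Finsupp.finset_sum_apply]
  rw [Finset.sum_eq_single j]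
  · rw [Finsupp.single_apply, if_pos rfl]
  · intro k _ hk
    rw [Finsupp.single_apply,
      if_neg (fun hc => hk ((Hf_strictMono p.1).injective hc))]
  · intro hc
    exact absurd (Finset.mem_univ j) hc

lemma Lmap_support (p : (Fin b → ℕ) × (Fin b → ℕ)) :
    (Lmap p).support ⊆ Finset.image (Hf p.1) Finset.univ := by
  refine subset_trans Finsupp.support_finset_sum ?_
  intro h hh
  rw [Finset.mem_biUnion] at hh
  obtain ⟨j, _, hj⟩ := hh
  have := Finsupp.support_single_subset hj
  rw [Finset.mem_singleton] at this
  subst this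
  exact Finset.mem_image_of_mem _ (Finset.mem_univ j)

lemma Lmap_notmem (p : (Fin b → ℕ) × (Fin b → ℕ)) {h : ℕ}
    (hh : h ∉ Finset.image (Hf p.1) Finset.univ) : Lmap p h = 0 := by
  by_contra hc
  exact hh (Lmap_support p (Finsupp.mem_support_iff.2 hc))

end Lmap

lemma sum_coeff_prod (φ : ℕ → QSeries) (ψ : ℕ → ℕ → FLField)
    (hφ : ∀ h n, 0 < h → PowerSeries.coeff (R := FLField) n (φ h)
      = if h ∣ n ∧ n ≠ 0 then ψ h (n / h) else 0)
    (κ : Finset ℕ → FLField) (a b N : ℕ) (hN : a ≤ N) :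
    ∑ S ∈ (Finset.Icc 1 N).powersetCard b,
        κ S * PowerSeries.coeff (R := FLField) a (∏ h ∈ S, φ h)
      = ∑ p ∈ Dset a b,
        κ (Finset.image (Hf p.1) Finset.univ) * ∏ j, ψ (Hf p.1 j) (p.2 j + 1) := by
  classical
  have step1 : ∀ S ∈ (Finset.Icc 1 N).powersetCard b,
      κ S * PowerSeries.coeff (R := FLField) a (∏ h ∈ S, φ h)
        = ∑ l ∈ Finset.finsuppAntidiag S a, κ S * ∏ h ∈ S,
            PowerSeries.coeff (R := FLField) (l h) (φ h) := by
    intro S _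
    rw [PowerSeries.coeff_prod, Finset.mul_sum]
  rw [Finset.sum_congr rfl step1, Finset.sum_sigma']
  have vanish : ∀ q ∈ ((Finset.Icc 1 N).powersetCard b).sigma
      (fun S => Finset.finsuppAntidiag S a),
      (κ q.1 * ∏ h ∈ q.1, PowerSeries.coeff (R := FLField) (q.2 h) (φ h)) ≠ 0 →
      (∀ h ∈ q.1, h ∣ q.2 h ∧ q.2 h ≠ 0) := by
    intro q hq hne
    by_contra hP
    push_neg at hP
    obtain ⟨h0, hh0, hbad⟩ := hP
    obtain ⟨hq1, _⟩ := Finset.mem_sigma.1 hq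
    obtain ⟨hsub, _⟩ := Finset.mem_powersetCard.1 hq1
    have hpos : 0 < h0 := (Finset.mem_Icc.1 (hsub hh0)).1
    have hz : PowerSeries.coeff (R := FLField) (q.2 h0) (φ h0) = 0 := by
      rw [hφ _ _ hpos, if_neg (fun hc => hc.2 (hbad hc.1))]
    exact hne (by rw [Finset.prod_eq_zero hh0 hz, mul_zero])
  rw [← Finset.sum_filter_of_ne vanish]
  refine (Finset.sum_nbij
    (fun p => (⟨Finset.image (Hf p.1) Finset.univ, Lmap p⟩ : Σ _ : Finset ℕ, ℕ →₀ ℕ))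
    ?_ ?_ ?_ ?_).symm
  · -- membership
    intro p hp
    have hW : Wt p.1 p.2 = a := mem_Dset.1 hp
    rw [Finset.mem_filter]
    refine ⟨Finset.mem_sigma.2 ⟨?_, ?_⟩, ?_⟩
    · rw [Finset.mem_powersetCard]
      constructor
      · intro h hh
        rw [Finset.mem_image] at hh
        obtain ⟨j, _, rfl⟩ := hh
        rw [Finset.mem_Icc]
        exact ⟨Hf_pos p.1 j, le_trans (hW ▸ Hf_le_Wt p.1 p.2 j) hN⟩
      · rw [Finset.card_image_of_injective _ (Hf_strictMono p.1).injective,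
          Finset.card_univ, Fintype.card_fin]
    · rw [Finset.mem_finsuppAntidiag]
      refine ⟨?_, Lmap_support p⟩
      rw [Finset.sum_image (fun x _ y _ hxy => (Hf_strictMono p.1).injective hxy)]
      calc ∑ j, Lmap p (Hf p.1 j) = ∑ j, (p.2 j + 1) * Hf p.1 j :=
            Finset.sum_congr rfl fun j _ => Lmap_apply p j
        _ = a := hW
    · intro h hh
      rw [Finset.mem_image] at hh
      obtain ⟨j, _, rfl⟩ := hh
      rw [Lmap_apply]
      exact ⟨dvd_mul_left _ _, Nat.mul_ne_zero (by omega) (Hf_pos p.1 j).ne'⟩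
  · -- injectivity
    intro p hp p' hp' heq
    obtain ⟨h1, h2⟩ := Sigma.mk.inj_iff.1 heq
    have hL : Lmap p = Lmap p' := eq_of_heq h2
    have hcard : (Finset.image (Hf p'.1) Finset.univ).card = b := by
      rw [Finset.card_image_of_injective _ (Hf_strictMono p'.1).injective,
        Finset.card_univ, Fintype.card_fin]
    have e1 : Hf p.1 = ⇑((Finset.image (Hf p'.1) Finset.univ).orderEmbOfFin hcard) :=
      Finset.orderEmbOfFin_unique hcard
        (fun x => h1 ▸ Finset.mem_image_of_mem _ (Finset.mem_univ x)) (Hf_strictMono p.1)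
    have e2 : Hf p'.1 = ⇑((Finset.image (Hf p'.1) Finset.univ).orderEmbOfFin hcard) :=
      Finset.orderEmbOfFin_unique hcard
        (fun x => Finset.mem_image_of_mem _ (Finset.mem_univ x)) (Hf_strictMono p'.1)
    have hHf : ∀ j, Hf p.1 j = Hf p'.1 j := fun j => congrFun (e1.trans e2.symm) j
    have hu : p.1 = p'.1 := Hf_inj hHf
    have hv : p.2 = p'.2 := by
      funext j
      have hj := Lmap_apply p j
      have hj' := Lmap_apply p' j
      rw [← hL, ← hHf j] at hj'
      rw [hj] at hj'
      have := Nat.eq_of_mul_eq_mul_right (Hf_pos p.1 j) hj'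
      omega
    exact Prod.ext hu hv
  · -- surjectivity
    rintro ⟨S, l⟩ hq
    rw [Finset.mem_coe, Finset.mem_filter] at hq
    obtain ⟨hq1, hgood⟩ := hq
    obtain ⟨hS, hl⟩ := Finset.mem_sigma.1 hq1
    obtain ⟨hsub, hcard⟩ := Finset.mem_powersetCard.1 hS
    obtain ⟨hlsum, hlsupp⟩ := Finset.mem_finsuppAntidiag.1 hl
    set e : Fin b → ℕ := fun k => S.orderEmbOfFin hcard k with he_def
    have he : StrictMono e := (S.orderEmbOfFin hcard).strictMono
    have hemem : ∀ k, e k ∈ S := fun k => Finset.orderEmbOfFin_mem S hcard k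
    have h1e : ∀ k, 1 ≤ e k := fun k => (Finset.mem_Icc.1 (hsub (hemem k))).1
    obtain ⟨u, hu⟩ := exists_uOf e he h1e
    have himg : Finset.image (Hf u) Finset.univ = S := by
      rw [hu]
      apply Finset.coe_injective
      rw [Finset.coe_image, Finset.coe_univ, Set.image_univ]
      exact Finset.range_orderEmbOfFin S hcard
    set v : Fin b → ℕ := fun j => l (e j) / e j - 1 with hv_def
    have hgood' : ∀ j, e j ∣ l (e j) ∧ l (e j) ≠ 0 := fun j => hgood (e j) (hemem j)
    have hv1 : ∀ j, (v j + 1) * e j = l (e j) := by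
      intro j
      obtain ⟨hdvd, hne⟩ := hgood' j
      have hpos : 0 < e j := h1e j
      have hdiv : 1 ≤ l (e j) / e j :=
        (Nat.one_le_div_iff hpos).2 (Nat.le_of_dvd (Nat.pos_of_ne_zero hne) hdvd)
      rw [hv_def]
      simp only
      rw [Nat.sub_add_cancel hdiv, Nat.div_mul_cancel hdvd]
    have hHfe : ∀ j, Hf u j = e j := fun j => by rw [hu]
    refine ⟨(u, v), ?_, ?_⟩
    · rw [Finset.mem_coe, mem_Dset]
      show ∑ j, (v j + 1) * Hf u j = a
      calc ∑ j, (v j + 1) * Hf u j = ∑ j, l (e j) := by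
            refine Finset.sum_congr rfl fun j _ => ?_
            rw [hHfe j]
            exact hv1 j
        _ = a := by
            rw [← hlsum, ← himg, hu,
              Finset.sum_image (fun x _ y _ hxy => he.injective hxy)]
    · show (⟨Finset.image (Hf u) Finset.univ, Lmap (u, v)⟩ : Σ _ : Finset ℕ, ℕ →₀ ℕ) = ⟨S, l⟩
      have hLl : Lmap (u, v) = l := by
        ext h
        by_cases hh : h ∈ S
        · rw [← himg, Finset.mem_image] at hh
          obtain ⟨j, _, rfl⟩ := hh
          rw [Lmap_apply (u, v) j]
          show (v j + 1) * Hf u j = l (Hf u j)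
          rw [hHfe j]
          exact hv1 j
        · rw [Lmap_notmem (u, v) (fun hc => hh (himg ▸ hc)),
            Finsupp.notMem_support_iff.1 (fun hc => hh (hlsupp hc))]
      rw [himg, hLl]
  · -- values
    intro p hp
    congr 1
    rw [Finset.prod_image (fun x _ y _ hxy => (Hf_strictMono p.1).injective hxy)]
    refine Finset.prod_congr rfl fun j _ => ?_
    rw [Lmap_apply p j, hφ _ _ (Hf_pos p.1 j),
      if_pos ⟨dvd_mul_left _ _, Nat.mul_ne_zero (by omega) (Hf_pos p.1 j).ne'⟩,
      Nat.mul_div_cancel _ (Hf_pos p.1 j)]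

lemma maxD_eq {S : Finset ℕ} {i : ℕ} (hi : i ∈ S) (hall : ∀ x ∈ S, x ≤ i) :
    S.max.unbotD 0 = i := by
  obtain ⟨m, hm⟩ := Finset.max_of_mem hi
  rw [hm]
  exact le_antisymm (hall m (Finset.mem_of_max hm)) (Finset.le_max_of_eq hi hm)

lemma maxD_image_Hf {n : ℕ} (u : Fin (n + 1) → ℕ) :
    ((Finset.image (Hf u) Finset.univ).max.unbotD 0 : ℕ) = ∑ k, (u k + 1) := by
  rw [← Hf_last u]
  apply maxD_eq (Finset.mem_image_of_mem _ (Finset.mem_univ _))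
  intro x hx
  rw [Finset.mem_image] at hx
  obtain ⟨j, _, rfl⟩ := hx
  exact (Hf_strictMono u).monotone (Fin.le_last j)

lemma notmem_of_pc {i k : ℕ} {S' : Finset ℕ} (hS' : S' ∈ (Finset.Icc 1 (i - 1)).powersetCard k)
    (hi : 1 ≤ i) : i ∉ S' := fun hc => by
  have := (Finset.mem_Icc.1 ((Finset.mem_powersetCard.1 hS').1 hc)).2
  omega

lemma maxD_insert {i k : ℕ} {S' : Finset ℕ} (hS' : S' ∈ (Finset.Icc 1 (i - 1)).powersetCard k)
    (hi : 1 ≤ i) : ((insert i S').max.unbotD 0 : ℕ) = i := by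
  apply maxD_eq (Finset.mem_insert_self i S')
  intro x hx
  rcases Finset.mem_insert.1 hx with rfl | hx
  · exact le_rfl
  · have := (Finset.mem_Icc.1 ((Finset.mem_powersetCard.1 hS').1 hx)).2
    omega

lemma sum_sigma_max (I k : ℕ) (G : Finset ℕ → FLField) :
    ∑ i ∈ Finset.Icc 1 I, ∑ S' ∈ (Finset.Icc 1 (i - 1)).powersetCard k, G (insert i S')
      = ∑ S ∈ (Finset.Icc 1 I).powersetCard (k + 1), G S := by
  classical
  rw [Finset.sum_sigma']
  refine Finset.sum_nbij (fun q => insert q.1 q.2) ?_ ?_ ?_ ?_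
  · rintro ⟨i, S'⟩ hq
    obtain ⟨hi, hS'⟩ := Finset.mem_sigma.1 hq
    obtain ⟨hsub, hcard⟩ := Finset.mem_powersetCard.1 hS'
    rw [Finset.mem_Icc] at hi
    rw [Finset.mem_powersetCard]
    constructor
    · refine Finset.insert_subset (Finset.mem_Icc.2 ⟨hi.1, hi.2⟩) (hsub.trans ?_)
      exact Finset.Icc_subset_Icc_right (by omega)
    · rw [Finset.card_insert_of_notMem (notmem_of_pc hS' hi.1), hcard]
  · rintro ⟨i, S'⟩ hq ⟨i2, S2⟩ hq2 heq
    rw [Finset.mem_coe] at hq hq2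
    obtain ⟨hi, hS'⟩ := Finset.mem_sigma.1 hq
    obtain ⟨hi2, hS2⟩ := Finset.mem_sigma.1 hq2
    simp only at hi hS' hi2 hS2 heq
    rw [Finset.mem_Icc] at hi hi2
    have h1 : i = i2 := by
      rw [← maxD_insert hS' hi.1, ← maxD_insert hS2 hi2.1, heq]
    subst h1
    have h2 : S' = S2 := by
      rw [← Finset.erase_insert (notmem_of_pc hS' hi.1),
        ← Finset.erase_insert (notmem_of_pc hS2 hi2.1), heq]
    subst h2
    rfl
  · intro S hS
    rw [Finset.mem_coe] at hS
    obtain ⟨hsub, hcard⟩ := Finset.mem_powersetCard.1 hS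
    have hne : S.Nonempty := Finset.card_pos.1 (by omega)
    obtain ⟨m, hm⟩ := Finset.max_of_nonempty hne
    have hmS : m ∈ S := Finset.mem_of_max hm
    have hm1 : 1 ≤ m ∧ m ≤ I := Finset.mem_Icc.1 (hsub hmS)
    refine ⟨⟨m, S.erase m⟩, ?_, ?_⟩
    · rw [Finset.mem_coe, Finset.mem_sigma]
      constructor
      · exact Finset.mem_Icc.2 hm1
      · rw [Finset.mem_powersetCard]
        constructor
        · intro x hx
          obtain ⟨hxm, hxS⟩ := Finset.mem_erase.1 hx
          have hx1 := Finset.le_max_of_eq hxS hm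
          have hx2 := (Finset.mem_Icc.1 (hsub hxS)).1
          show x ∈ Finset.Icc 1 (m - 1)
          rw [Finset.mem_Icc]
          omega
        · show (S.erase m).card = k
          rw [Finset.card_erase_of_mem hmS, hcard]
          omega
    · simp only
      rw [Finset.insert_erase hmS]
  · rintro ⟨i, S'⟩ _
    rfl

lemma Dset_swap (a b : ℕ) :
    ∑ p ∈ Dset a b, zX ^ (∑ j, (p.2 j + 1)) = ∑ p ∈ Dset a b, zX ^ (∑ j, (p.1 j + 1)) := by
  refine Finset.sum_nbij'
    (fun p => (fun j => p.2 (Fin.rev j), fun j => p.1 (Fin.rev j)))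
    (fun p => (fun j => p.2 (Fin.rev j), fun j => p.1 (Fin.rev j))) ?_ ?_ ?_ ?_ ?_
  · intro p hp
    rw [mem_Dset]
    show Wt (fun j => p.2 (Fin.rev j)) (fun j => p.1 (Fin.rev j)) = a
    rw [Wt_swap]
    exact mem_Dset.1 hp
  · intro p hp
    rw [mem_Dset]
    show Wt (fun j => p.2 (Fin.rev j)) (fun j => p.1 (Fin.rev j)) = a
    rw [Wt_swap]
    exact mem_Dset.1 hp
  · intro p _
    refine Prod.ext ?_ ?_ <;> funext j <;> simp [Fin.rev_rev]
  · intro p _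
    refine Prod.ext ?_ ?_ <;> funext j <;> simp [Fin.rev_rev]
  · intro p _
    congr 1
    exact Fintype.sum_equiv Fin.revPerm _ _ fun j => by simp [Fin.rev_rev]

lemma phiL_def (h : ℕ) : xq * qv ^ h * (1 + xq * qv ^ h)⁻¹ = phiL h := rfl
lemma phiR_def (h : ℕ) : qv ^ h * (1 - qv ^ h)⁻¹ = phiR h := rfl

lemma LHS_eval (a b H : ℕ) (hH : a ≤ H) :
    PowerSeries.coeff (R := FLField) a ((PowerSeries.coeff (R := QSeries) b)
      (∏ h ∈ Finset.Icc 1 H,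
        (1 + PowerSeries.C (R := QSeries) (xq * qv ^ h * (1 + xq * qv ^ h)⁻¹) * PowerSeries.X)))
    = (-1) ^ b * ∑ p ∈ Dset a b, zX ^ (∑ j, (p.2 j + 1)) := by
  rw [coeff_prod_one_add, map_sum]
  simp only [phiL_def]
  have key := sum_coeff_prod phiL (fun h m => -zX ^ m)
    (fun h n hh => coeff_phiL hh n) (fun _ => 1) a b H hH
  simp only [one_mul] at key
  rw [key, Finset.mul_sum]
  refine Finset.sum_congr rfl fun p _ => ?_
  calc (∏ j, -zX ^ (p.2 j + 1)) = ∏ j : Fin b, (-1 : FLField) * zX ^ (p.2 j + 1) := by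
        refine Finset.prod_congr rfl fun j _ => by ring
    _ = ((-1 : FLField) ^ b) * ∏ j : Fin b, zX ^ (p.2 j + 1) := by
        rw [Finset.prod_mul_distrib, Finset.prod_const, Finset.card_univ, Fintype.card_fin]
    _ = (-1) ^ b * zX ^ (∑ j, (p.2 j + 1)) := by rw [Finset.prod_pow_eq_pow_sum]

lemma RHS_eval (a k I : ℕ) (hI : a ≤ I) :
    PowerSeries.coeff (R := FLField) a ((PowerSeries.coeff (R := QSeries) (k + 1))
      (1 - PowerSeries.X * ∑ i ∈ Finset.Icc 1 I,
        PowerSeries.C (R := QSeries) ((-xq) ^ i * qv ^ i * (1 - qv ^ i)⁻¹) *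
          ∏ h ∈ Finset.Icc 1 (i - 1),
            (1 - PowerSeries.C (R := QSeries) (qv ^ h * (1 - qv ^ h)⁻¹) * PowerSeries.X)))
    = (-1) ^ (k + 1) * ∑ p ∈ Dset a (k + 1), zX ^ (∑ j, (p.1 j + 1)) := by
  have fac : ∀ c : QSeries, (1 : WSeries) - PowerSeries.C (R := QSeries) c * PowerSeries.X
      = 1 + PowerSeries.C (R := QSeries) (-c) * PowerSeries.X := fun c => by
    rw [map_neg, neg_mul, sub_eq_add_neg]
  have e0 : ∀ T : WSeries, (PowerSeries.coeff (R := QSeries) (k + 1)) (1 - PowerSeries.X * T)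
      = -(PowerSeries.coeff (R := QSeries) k) T := fun T => by
    rw [map_sub, PowerSeries.coeff_succ_X_mul, PowerSeries.coeff_one,
      if_neg (Nat.succ_ne_zero k), zero_sub]
  rw [e0, map_sum, map_neg, map_sum]
  have term : ∀ i ∈ Finset.Icc 1 I,
      PowerSeries.coeff (R := FLField) a ((PowerSeries.coeff (R := QSeries) k)
        (PowerSeries.C (R := QSeries) ((-xq) ^ i * qv ^ i * (1 - qv ^ i)⁻¹) *
          ∏ h ∈ Finset.Icc 1 (i - 1),
            (1 - PowerSeries.C (R := QSeries) (qv ^ h * (1 - qv ^ h)⁻¹) * PowerSeries.X)))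
      = ∑ S' ∈ (Finset.Icc 1 (i - 1)).powersetCard k,
          (-1) ^ k * (zX ^ ((insert i S').max.unbotD 0) *
            PowerSeries.coeff (R := FLField) a (∏ h ∈ insert i S', phiR h)) := by
    intro i hi
    have hi1 : 1 ≤ i := (Finset.mem_Icc.1 hi).1
    rw [PowerSeries.coeff_C_mul]
    simp_rw [fac]
    rw [coeff_prod_one_add, Finset.mul_sum, map_sum]
    refine Finset.sum_congr rfl fun S' hS' => ?_
    have hcard : S'.card = k := (Finset.mem_powersetCard.1 hS').2
    have hnm : i ∉ S' := notmem_of_pc hS' hi1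
    have key : ((-xq) ^ i * qv ^ i * (1 - qv ^ i)⁻¹) *
        ∏ h ∈ S', -(qv ^ h * (1 - qv ^ h)⁻¹)
        = PowerSeries.C (R := FLField) ((-1) ^ k * zX ^ i) * ∏ h ∈ insert i S', phiR h := by
      simp only [phiR_def]
      have hneg : (∏ h ∈ S', -phiR h) = ((-1 : QSeries)) ^ k * ∏ h ∈ S', phiR h := by
        calc (∏ h ∈ S', -phiR h) = ∏ h ∈ S', (-1 : QSeries) * phiR h := by
              refine Finset.prod_congr rfl fun h _ => by ring
          _ = ((-1 : QSeries)) ^ k * ∏ h ∈ S', phiR h := by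
              rw [Finset.prod_mul_distrib, Finset.prod_const, hcard]
      have hxqi : (-xq) ^ i = PowerSeries.C (R := FLField) (zX ^ i) := by
        rw [xq, ← map_neg, ← map_pow]
        rfl
      rw [Finset.prod_insert hnm, hneg, hxqi,
        show ((-1 : QSeries)) ^ k = PowerSeries.C (R := FLField) ((-1) ^ k) by
          rw [map_pow, map_neg, map_one],
        map_mul, ← phiR_def i]
      ring
    rw [key, PowerSeries.coeff_C_mul, maxD_insert hS' hi1]
    ring
  rw [Finset.sum_congr rfl term]
  have term2 : ∀ i ∈ Finset.Icc 1 I,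
      (∑ S' ∈ (Finset.Icc 1 (i - 1)).powersetCard k,
        (-1 : FLField) ^ k * (zX ^ ((insert i S').max.unbotD 0) *
          PowerSeries.coeff (R := FLField) a (∏ h ∈ insert i S', phiR h)))
      = (-1) ^ k * ∑ S' ∈ (Finset.Icc 1 (i - 1)).powersetCard k,
          (zX ^ ((insert i S').max.unbotD 0) *
            PowerSeries.coeff (R := FLField) a (∏ h ∈ insert i S', phiR h)) := fun i _ => by
    rw [Finset.mul_sum]
  rw [Finset.sum_congr rfl term2, ← Finset.mul_sum]
  rw [sum_sigma_max I k
    (fun S => zX ^ (S.max.unbotD 0) * PowerSeries.coeff (R := FLField) a (∏ h ∈ S, phiR h))]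
  have key2 := sum_coeff_prod phiR (fun _ _ => 1)
    (fun h n hh => coeff_phiR hh n) (fun S => zX ^ (S.max.unbotD 0)) a (k + 1) I hI
  rw [key2]
  have term3 : ∀ p ∈ Dset a (k + 1),
      (zX ^ ((Finset.image (Hf p.1) Finset.univ).max.unbotD 0) *
        ∏ j : Fin (k + 1), (1 : FLField))
      = zX ^ (∑ j, (p.1 j + 1)) := by
    intro p _
    rw [Finset.prod_const_one, mul_one, maxD_image_Hf]
  rw [Finset.sum_congr rfl term3]
  rw [show ((-1 : FLField)) ^ (k + 1) = -(-1 : FLField) ^ k by ring]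
  ring


/-- As formal power series in `w` (coefficients formal power series in `q` with
rational-function coefficients in `x`), the product `∏_{h ≥ 1} (1 + x w q^h/(1+x q^h))`
equals `1 - w ∑_{i ≥ 1} (-x)^i (q^i/(1-q^i)) ∏_{1 ≤ h < i} (1 - w q^h/(1-q^h))`.
Both sides converge coefficientwise, so the identity is stated as: every fixed
coefficient (of `q^a w^b`) of the partial products/sums stabilizes to a common value. -/
theorem infinite_product_expansion :
    ∀ a b : ℕ, ∃ N : ℕ, ∀ H : ℕ, N ≤ H → ∀ I : ℕ, N ≤ I →
      (PowerSeries.coeff (R := FLField) a) ((PowerSeries.coeff (R := QSeries) b)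
        (∏ h ∈ Icc 1 H,
          (1 + PowerSeries.C (R := QSeries) (xq * qv ^ h * (1 + xq * qv ^ h)⁻¹) * PowerSeries.X)))
      = (PowerSeries.coeff (R := FLField) a) ((PowerSeries.coeff (R := QSeries) b)
        (1 - PowerSeries.X * ∑ i ∈ Icc 1 I,
          PowerSeries.C (R := QSeries) ((-xq) ^ i * qv ^ i * (1 - qv ^ i)⁻¹) *
            ∏ h ∈ Icc 1 (i - 1),
              (1 - PowerSeries.C (R := QSeries) (qv ^ h * (1 - qv ^ h)⁻¹) * PowerSeries.X))) := by
  intro a b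
  refine ⟨a, fun H hH I hI => ?_⟩
  cases b with
  | zero =>
    have hL : (PowerSeries.coeff (R := QSeries) 0)
        (∏ h ∈ Icc 1 H,
          (1 + PowerSeries.C (R := QSeries) (xq * qv ^ h * (1 + xq * qv ^ h)⁻¹) * PowerSeries.X))
        = 1 := by
      rw [coeff_prod_one_add, Finset.powersetCard_zero, Finset.sum_singleton, Finset.prod_empty]
    have hR : (PowerSeries.coeff (R := QSeries) 0)
        (1 - PowerSeries.X * ∑ i ∈ Icc 1 I,
          PowerSeries.C (R := QSeries) ((-xq) ^ i * qv ^ i * (1 - qv ^ i)⁻¹) *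
            ∏ h ∈ Icc 1 (i - 1),
              (1 - PowerSeries.C (R := QSeries) (qv ^ h * (1 - qv ^ h)⁻¹) * PowerSeries.X))
        = 1 := by
      rw [map_sub, PowerSeries.coeff_zero_X_mul, PowerSeries.coeff_one, if_pos rfl, sub_zero]
    rw [hL, hR]
  | succ k =>
    rw [LHS_eval a (k + 1) H hH, RHS_eval a k I hI, Dset_swap]
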